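/- Let $g$ be a permutation of a finite set $\Omega$ whose set of fixed points has size at most $|\Omega|/2$. Then $g$ fixes setwise at most $2^{3|\Omega|/4}$ subsets of $\Omega$. -/

import Mathlib

open MulAction

private lemma zpow_image_mem {Ω : Type*} (g : Equiv.Perm Ω) {S : Set Ω}
    (hS : ⇑g '' S = S) : ∀ (n : ℤ) {x : Ω}, x ∈ S → (g ^ n) x ∈ S := by
  have key : ∀ y : Ω, g y ∈ S ↔ y ∈ S := by
    intro y
    constructor
    · intro hy
      rw [← hS] at hy
      obtain ⟨z, hz, hzy⟩ := hy
      rwa [g.injective hzy] at hz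
    · intro hy
      rw [← hS]
      exact Set.mem_image_of_mem _ hy
  intro n
  induction n using Int.induction_on with
  | zero => simp
  | succ i ih =>
      intro x hx
      have hx' : g x ∈ S := (key x).mpr hx
      have := ih hx'
      rw [zpow_add_one]
      simpa [Equiv.Perm.mul_apply] using this
  | pred i ih =>
      intro x hx
      have h1 : g⁻¹ x ∈ S := by
        rw [← key]
        simpa using hx
      have := ih h1
      rw [zpow_sub_one]
      simpa [Equiv.Perm.mul_apply] using this

/-- A permutation of a finite set `Ω` with at most `|Ω|/2` fixed points fixes
setwise at most `2 ^ (3|Ω|/4)` subsets of `Ω`. -/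
theorem stmt_4 {Ω : Type*} [Fintype Ω] (g : Equiv.Perm Ω)
    (h : 2 * Set.ncard {x : Ω | g x = x} ≤ Fintype.card Ω) :
    (Nat.card {S : Set Ω // ⇑g '' S = S} : ℝ) ≤
      2 ^ (3 * (Fintype.card Ω : ℝ) / 4) := by
  classical
  set n := Fintype.card Ω with hn
  set H := Subgroup.zpowers g with hH
  have hact : ∀ (p : H) (x : Ω), p • x = (p : Equiv.Perm Ω) x := fun p x => rfl
  let Q := orbitRel.Quotient H Ω
  have : Finite Q := Quotient.finite _
  let π : Ω → Q := Quotient.mk''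
  -- invariant sets are determined by their image in Q
  have hinj : Function.Injective
      (fun S : {S : Set Ω // ⇑g '' S = S} => π '' S.1) := by
    intro S T hST
    have main : ∀ (A B : {S : Set Ω // ⇑g '' S = S}), π '' A.1 = π '' B.1 →
        ∀ x ∈ A.1, x ∈ B.1 := by
      intro A B hAB x hx
      have : π x ∈ π '' B.1 := hAB ▸ Set.mem_image_of_mem _ hx
      obtain ⟨y, hy, hyx⟩ := this
      have hrel : (orbitRel H Ω) y x := Quotient.eq''.mp hyx
      rw [orbitRel_apply] at hrel
      obtain ⟨p, hp⟩ := hrel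
      obtain ⟨m, hm⟩ := p.2
      have hm' : g ^ m = (p : Equiv.Perm Ω) := hm
      have : (g ^ m) x = y := by
        rw [← hp]
        show (g ^ m) x = (p : Equiv.Perm Ω) x
        rw [hm']
      have := zpow_image_mem g B.2 (-m) (this ▸ hy)
      simpa using this
    ext x
    exact ⟨main S T hST x, main T S hST.symm x⟩
  have hcard1 : Nat.card {S : Set Ω // ⇑g '' S = S} ≤ 2 ^ Nat.card Q := by
    have := Nat.card_le_card_of_injective _ hinj
    have hQ : Nat.card (Set Q) = 2 ^ Nat.card Q := by
      rw [show (Set Q) = (Q → Prop) from rfl, Nat.card_fun]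
      simp
    omega
  -- now bound Nat.card Q
  have : Fintype Q := Fintype.ofFinite Q
  let c : Q → ℕ := fun q => Nat.card (orbit H (Quotient.out q))
  have hsum : ∑ q : Q, c q = n := by
    have h0 : Nat.card ((ω : Q) × orbit H (Quotient.out ω)) = Fintype.card Ω := by
      rw [Nat.card_congr (selfEquivSigmaOrbits H Ω).symm, Nat.card_eq_fintype_card]
    rw [hn, ← h0, Nat.card_eq_fintype_card, Fintype.card_sigma]
    exact Finset.sum_congr rfl fun q _ => Nat.card_eq_fintype_card
  have hc1 : ∀ q : Q, 1 ≤ c q := by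
    intro q
    have : (Quotient.out q) ∈ orbit H (Quotient.out q) := mem_orbit_self _
    have hfin : Finite (orbit H (Quotient.out q)) := Set.Finite.to_subtype (Set.toFinite _)
    exact Nat.one_le_iff_ne_zero.mpr (Nat.card_ne_zero.mpr ⟨⟨⟨_, this⟩⟩, hfin⟩)
  let A : Finset Q := Finset.univ.filter (fun q => c q = 1)
  -- elements of A give fixed points
  have hfix : ∀ q ∈ A, g (Quotient.out q) = Quotient.out q := by
    intro q hq
    have hcq : c q = 1 := (Finset.mem_filter.mp hq).2
    have hsub : (orbit H (Quotient.out q)).Subsingleton := by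
      have : Nat.card (orbit H (Quotient.out q)) ≤ 1 := hcq.le
      intro a ha b hb
      have := Nat.card_eq_one_iff_unique.mp (le_antisymm this (hc1 q))
      have h1 := this.1
      have : (⟨a, ha⟩ : orbit H (Quotient.out q)) = ⟨b, hb⟩ := h1.allEq _ _
      exact Subtype.ext_iff.mp this
    have hg : g (Quotient.out q) ∈ orbit H (Quotient.out q) := by
      refine ⟨⟨g, Subgroup.mem_zpowers g⟩, rfl⟩
    exact hsub hg (mem_orbit_self _)
  have hAcard : A.card ≤ Set.ncard {x : Ω | g x = x} := by
    rw [Set.ncard_eq_toFinset_card']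
    apply Finset.card_le_card_of_injOn (fun q => Quotient.out q)
    · intro q hq
      simp only [Finset.mem_coe, Set.mem_toFinset, Set.mem_setOf_eq]
      exact hfix q hq
    · intro q _ q' _ hqq'
      exact Quotient.out_inj.mp hqq'
  -- sum bound : n ≥ 2 * card Q - card A
  have hsumbound : 2 * Fintype.card Q ≤ n + A.card := by
    have hsplit : ∑ q : Q, c q = ∑ q ∈ A, c q + ∑ q ∈ Aᶜ, c q :=
      (Finset.sum_add_sum_compl A c).symm
    have h1 : ∑ q ∈ A, c q = A.card := by
      rw [Finset.sum_congr rfl (fun q hq => (Finset.mem_filter.mp hq).2)]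
      simp
      rfl
    have h2 : 2 * Aᶜ.card ≤ ∑ q ∈ Aᶜ, c q := by
      have := Finset.card_nsmul_le_sum Aᶜ c 2 (fun q hq => by
        have hne : c q ≠ 1 := by
          intro hcq
          have : q ∈ A := Finset.mem_filter.mpr ⟨Finset.mem_univ q, hcq⟩
          exact (Finset.mem_compl.mp hq) this
        have := hc1 q
        omega)
      simpa [smul_eq_mul, mul_comm] using this
    have h3 : A.card + Aᶜ.card = Fintype.card Q := Finset.card_add_card_compl A
    omega
  have hQn : Nat.card Q = Fintype.card Q := Nat.card_eq_fintype_card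
  have hkey : 4 * Nat.card Q ≤ 3 * n := by omega
  calc (Nat.card {S : Set Ω // ⇑g '' S = S} : ℝ)
      ≤ ((2 ^ Nat.card Q : ℕ) : ℝ) := by exact_mod_cast hcard1
    _ = (2 : ℝ) ^ ((Nat.card Q : ℝ)) := by
        push_cast
        rw [Real.rpow_natCast]
    _ ≤ 2 ^ (3 * (n : ℝ) / 4) := by
        apply (Real.rpow_le_rpow_left_iff one_lt_two).mpr
        have : (4 * Nat.card Q : ℝ) ≤ 3 * n := by exact_mod_cast hkey
        linarith
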